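/- (Necessity of Effect Connectivity: non-identifiability construction.) Let μ be a Borel probability measure on a second-countable topological space X, h : X → ℝ, and f : X × ℝ → ℝ. Define B = {(t̃, z) ∈ X × ℝ : μ({t ∈ X : h(t) = z and f(t, z) = f(t̃, z)}) = 0}, and define f₂ : X × ℝ → ℝ by f₂(t̃, z) = f(t̃, z) + 10·𝟙_B(t̃, z). Assume that for every t̃ in the topological support of μ, μ({t ∈ X : h(t) = h(t̃) and f(t, h(t)) = f(t̃, h(t̃))}) > 0. Then: (i) for every t̃ in the topological support of μ, (t̃, h(t̃)) ∉ B, hence f₂(t̃, h(t̃)) = f(t̃, h(t̃)); in particular f₂(t, h(t)) = f(t, h(t)) for μ-almost every t; and (ii) for every (t̃, z) ∈ B, f₂(t̃, z) = f(t̃, z) + 10 ≠ f(t̃, z). Thus if B is nonempty (Effect Connectivity fails), the outcome functions f and f₂ generate the same observed data (t, f(t, h(t))) μ-a.s. while their conditional effects differ on B. -/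

import Mathlib

open MeasureTheory

/-- Necessity of Effect Connectivity (non-identifiability construction): with
`B` the set of intervention/confounder pairs violating Effect Connectivity and
`f₂ = f + 10·𝟙_B`, the modified outcome function `f₂` agrees with `f` on the observed
data (on the topological support of `μ`, hence `μ`-a.e.), while the conditional
effects of `f₂` and `f` differ on all of `B`. -/
theorem effect_connectivity_necessary
    {X : Type*} [TopologicalSpace X] [SecondCountableTopology X]
    [MeasurableSpace X] [BorelSpace X]
    (μ : Measure X) [IsProbabilityMeasure μ]
    (h : X → ℝ) (f : X → ℝ → ℝ)
    (B : Set (X × ℝ))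
    (hB : B = {p : X × ℝ | μ {t : X | h t = p.2 ∧ f t p.2 = f p.1 p.2} = 0})
    (f₂ : X → ℝ → ℝ)
    (hf₂ : ∀ t z, f₂ t z = f t z + Set.indicator B (fun _ => (10 : ℝ)) (t, z))
    (hconn : ∀ t0 : X, (∀ U : Set X, IsOpen U → t0 ∈ U → 0 < μ U) →
      0 < μ {t : X | h t = h t0 ∧ f t (h t) = f t0 (h t0)}) :
    (∀ t0 : X, (∀ U : Set X, IsOpen U → t0 ∈ U → 0 < μ U) →
        (t0, h t0) ∉ B ∧ f₂ t0 (h t0) = f t0 (h t0)) ∧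
    (∀ᵐ t ∂μ, f₂ t (h t) = f t (h t)) ∧
    (∀ p ∈ B, f₂ p.1 p.2 = f p.1 p.2 + 10 ∧ f₂ p.1 p.2 ≠ f p.1 p.2) := by
  have hsupp : ∀ t0 : X, (∀ U : Set X, IsOpen U → t0 ∈ U → 0 < μ U) →
      (t0, h t0) ∉ B ∧ f₂ t0 (h t0) = f t0 (h t0) := by
    intro t0 ht0
    have hpos := hconn t0 ht0
    have hset : {t : X | h t = h t0 ∧ f t (h t) = f t0 (h t0)} =
        {t : X | h t = h t0 ∧ f t (h t0) = f t0 (h t0)} := by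
      ext t
      constructor
      · rintro ⟨h1, h2⟩; refine ⟨h1, ?_⟩; rw [h1] at h2; exact h2
      · rintro ⟨h1, h2⟩; refine ⟨h1, ?_⟩; rw [h1]; exact h2
    have hnotB : (t0, h t0) ∉ B := by
      rw [hB]
      simp only [Set.mem_setOf_eq]
      intro hzero
      rw [hset] at hpos
      exact absurd hzero (ne_of_gt hpos)
    refine ⟨hnotB, ?_⟩
    rw [hf₂, Set.indicator_of_notMem hnotB, add_zero]
  refine ⟨hsupp, ?_, ?_⟩
  · -- a.e. statement
    set 𝒰 : Set (Set X) := {U | IsOpen U ∧ μ U = 0} with h𝒰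
    obtain ⟨S, hScount, hSsub, hSeq⟩ :=
      TopologicalSpace.isOpen_sUnion_countable 𝒰 (fun U hU => hU.1)
    have hnull : μ (⋃₀ 𝒰) = 0 := by
      rw [← hSeq, measure_sUnion_null_iff hScount]
      exact fun s hs => (hSsub hs).2
    refine measure_mono_null ?_ hnull
    intro t ht
    simp only [Set.mem_compl_iff, Set.mem_setOf_eq] at ht
    by_contra htU
    apply ht
    exact (hsupp t (fun U hU htU' => by
      rcases (zero_le : 0 ≤ μ U).lt_or_eq with hlt | heq
      · exact hlt
      · exact absurd ⟨U, ⟨hU, heq.symm⟩, htU'⟩ htU)).2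
  · intro p hp
    have : f₂ p.1 p.2 = f p.1 p.2 + 10 := by
      rw [hf₂, Set.indicator_of_mem (by simpa using hp)]
    exact ⟨this, by rw [this]; intro hc; linarith⟩
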